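/- In a SPAO GRAPE instance, suppose a Nash stable partition Π is established on agent set A, and a new agent a_r with SPAO preferences joins, choosing its most preferred task-coalition pair. Then the enlarged instance with agent set A ∪ {a_r} is still SPAO, admits a Nash stable partition, and greedy unilateral deviations re-converge to a Nash stable partition within at most |A|+1 iterations. -/

import Mathlib

def coalSize {A τ : Type*} [Fintype A] [DecidableEq τ] (π : A → τ) (j : τ) : ℕ :=
  (Finset.univ.filter fun k => π k = j).card

def joinSize {A τ : Type*} [Fintype A] [DecidableEq τ] (π : A → τ) (i : A) (j : τ) : ℕ :=
  if π i = j then coalSize π j else coalSize π j + 1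

def NashStable {A τ : Type*} [Fintype A] [DecidableEq τ]
    (R : A → τ × ℕ → τ × ℕ → Prop) (π : A → τ) : Prop :=
  ∀ (i : A) (j : τ), R i (π i, coalSize π (π i)) (j, joinSize π i j)

def SPrefers {A τ : Type*} (R : A → τ × ℕ → τ × ℕ → Prop) (i : A) (x y : τ × ℕ) : Prop :=
  R i x y ∧ ¬ R i y x

def GreedyStep {A τ : Type*} [Fintype A] [DecidableEq A] [DecidableEq τ]
    (R : A → τ × ℕ → τ × ℕ → Prop) (π π' : A → τ) : Prop :=
  ∃ (i : A) (j : τ),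
    SPrefers R i (j, joinSize π i j) (π i, coalSize π (π i)) ∧
    (∀ j' : τ, R i (j, joinSize π i j) (j', joinSize π i j')) ∧
    π' = Function.update π i j

private lemma rrefl {X : Type*} {r : X → X → Prop} (tot : ∀ x y, r x y ∨ r y x) (x : X) :
    r x x := (tot x x).elim id id

private lemma exists_best {τ X : Type*} [Fintype τ] [DecidableEq τ] [Nonempty τ]
    {r : X → X → Prop} (tot : ∀ x y, r x y ∨ r y x) (tr : Transitive r) (f : τ → X) :
    ∃ j : τ, ∀ j', r (f j) (f j') := by
  have key : ∀ s : Finset τ, s.Nonempty → ∃ j ∈ s, ∀ j' ∈ s, r (f j) (f j') := by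
    intro s
    induction s using Finset.induction_on with
    | empty => rintro ⟨x, hx⟩; simp at hx
    | @insert a t _ ih =>
      intro _
      rcases t.eq_empty_or_nonempty with rfl | ht
      · refine ⟨a, by simp, ?_⟩
        intro j' hj'
        simp only [Finset.mem_insert, Finset.notMem_empty, or_false] at hj'
        subst hj'
        exact rrefl tot _
      · obtain ⟨j, hj, hbest⟩ := ih ht
        rcases tot (f a) (f j) with h | h
        · refine ⟨a, Finset.mem_insert_self _ _, ?_⟩
          intro j' hj'
          rcases Finset.mem_insert.mp hj' with rfl | hj''
          · exact rrefl tot _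
          · exact tr h (hbest j' hj'')
        · refine ⟨j, Finset.mem_insert_of_mem hj, ?_⟩
          intro j' hj'
          rcases Finset.mem_insert.mp hj' with rfl | hj''
          · exact h
          · exact hbest j' hj''
  obtain ⟨j, _, hb⟩ := key Finset.univ ⟨Classical.arbitrary τ, Finset.mem_univ _⟩
  exact ⟨j, fun j' => hb j' (Finset.mem_univ _)⟩

private lemma coalSize_update_self {B τ : Type*} [Fintype B] [DecidableEq B] [DecidableEq τ]
    (π : B → τ) (i : B) (j : τ) (h : π i ≠ j) :
    coalSize (Function.update π i j) j = coalSize π j + 1 := by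
  rw [coalSize, coalSize]
  have hset : Finset.univ.filter (fun k => Function.update π i j k = j)
      = insert i (Finset.univ.filter fun k => π k = j) := by
    ext k
    simp only [Finset.mem_filter, Finset.mem_univ, true_and, Finset.mem_insert]
    rcases eq_or_ne k i with rfl | hk
    · simp [Function.update_self]
    · simp [Function.update_of_ne hk, hk]
  rw [hset, Finset.card_insert_of_notMem (by simp [h])]

private lemma coalSize_update_src {B τ : Type*} [Fintype B] [DecidableEq B] [DecidableEq τ]
    (π : B → τ) (i : B) (j : τ) (h : π i ≠ j) :
    coalSize (Function.update π i j) (π i) + 1 = coalSize π (π i) := by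
  rw [coalSize, coalSize]
  have hset : Finset.univ.filter (fun k => π k = π i)
      = insert i (Finset.univ.filter fun k => Function.update π i j k = π i) := by
    ext k
    simp only [Finset.mem_filter, Finset.mem_univ, true_and, Finset.mem_insert]
    rcases eq_or_ne k i with rfl | hk
    · simp
    · simp [Function.update_of_ne hk, hk]
  rw [hset, Finset.card_insert_of_notMem]
  simp only [Finset.mem_filter, Finset.mem_univ, true_and, Function.update_self]
  exact fun h' => h h'.symm

private lemma coalSize_update_neq {B τ : Type*} [Fintype B] [DecidableEq B] [DecidableEq τ]
    (π : B → τ) (i : B) (j j' : τ) (h1 : π i ≠ j') (h2 : j ≠ j') :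
    coalSize (Function.update π i j) j' = coalSize π j' := by
  rw [coalSize, coalSize]
  congr 1
  ext k
  simp only [Finset.mem_filter, Finset.mem_univ, true_and]
  rcases eq_or_ne k i with rfl | hk
  · simp [Function.update_self, h1, h2]
  · simp [Function.update_of_ne hk]

/-- Invariant: sizes are `N + [· = c]`, every agent weakly prefers its seat at size `N` to
anything at size `N+1`, and locked agents prefer their seat even at size `N+1`. -/
def InvC {A τ : Type*} [Fintype A] [DecidableEq τ]
    (R : Option A → τ × ℕ → τ × ℕ → Prop) (N : τ → ℕ) (c : τ)
    (π : Option A → τ) (L : Finset (Option A)) : Prop :=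
  (∀ j, coalSize π j = N j + if j = c then 1 else 0) ∧
  (∀ i j, R i (π i, N (π i)) (j, N j + 1)) ∧
  (∀ i ∈ L, ∀ j, R i (π i, N (π i) + 1) (j, N j + 1))

private lemma happyOf {A τ : Type*} [Fintype A] [Fintype τ] [DecidableEq τ]
    {R : Option A → τ × ℕ → τ × ℕ → Prop} {N : τ → ℕ} {c : τ} {π : Option A → τ}
    (htotal : ∀ i x y, R i x y ∨ R i y x) (htrans : ∀ i, Transitive (R i))
    (hSPAO : ∀ (i : Option A) (t : τ) (p1 p2 : ℕ), p1 < p2 → R i (t, p1) (t, p2))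
    (hc : ∀ j, coalSize π j = N j + if j = c then 1 else 0)
    (i : Option A)
    (hS : ∀ j, R i (π i, N (π i) + if π i = c then 1 else 0) (j, N j + 1)) :
    ∀ j, R i (π i, coalSize π (π i)) (j, joinSize π i j) := by
  intro j
  unfold joinSize
  by_cases hj : π i = j
  · rw [if_pos hj, ← hj]
    exact rrefl (htotal i) _
  · rw [if_neg hj, hc j, hc (π i)]
    by_cases hjc : j = c
    · rw [if_pos hjc]
      exact htrans i (hS j) (hSPAO i j (N j + 1) (N j + 1 + 1) (by omega))
    · rw [if_neg hjc]
      exact hS j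

private lemma inv_step {A τ : Type*} [Fintype A] [DecidableEq A] [Fintype τ] [DecidableEq τ]
    {R : Option A → τ × ℕ → τ × ℕ → Prop}
    (htotal : ∀ i x y, R i x y ∨ R i y x) (htrans : ∀ i, Transitive (R i))
    (hSPAO : ∀ (i : Option A) (t : τ) (p1 p2 : ℕ), p1 < p2 → R i (t, p1) (t, p2))
    {N : τ → ℕ} {c : τ} {π π' : Option A → τ} {L : Finset (Option A)}
    (hInv : InvC R N c π L) (hg : GreedyStep R π π') :
    ∃ c' L', InvC R N c' π' L' ∧ L.card + 1 ≤ L'.card := by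
  obtain ⟨hsz, hstr, hss1⟩ := hInv
  obtain ⟨i, j, hpref, hbestall, rfl⟩ := hg
  have hpref2 : ¬ R i (π i, coalSize π (π i)) (j, joinSize π i j) := hpref.2
  have hic : π i = c := by
    by_contra hic
    exact hpref2 (happyOf htotal htrans hSPAO hsz i
      (fun j' => by simpa [if_neg hic] using hstr i j') j)
  have hiL : i ∉ L := by
    intro hiL
    exact hpref2 (happyOf htotal htrans hSPAO hsz i
      (fun j' => by simpa [if_pos hic] using hss1 i hiL j') j)
  have hjc : j ≠ c := by
    rintro rfl
    apply hpref2
    have hje : joinSize π i j = coalSize π (π i) := by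
      unfold joinSize
      rw [if_pos hic, hic]
    rw [hje, ← hic]
    exact rrefl (htotal i) _
  have hπij : π i ≠ j := fun h => hjc (h.symm.trans hic)
  have hjoin : ∀ j', joinSize π i j' = N j' + 1 := by
    intro j'
    unfold joinSize
    by_cases hj' : π i = j'
    · rw [if_pos hj', hsz j', if_pos (hj'.symm.trans hic)]
    · rw [if_neg hj', hsz j', if_neg (fun h : j' = c => hj' (hic.trans h.symm))]
  have hSS1 : ∀ j', R i (j, N j + 1) (j', N j' + 1) := by
    intro j'
    have hb := hbestall j'
    rwa [hjoin j, hjoin j'] at hb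
  have hsz' : ∀ j'', coalSize (Function.update π i j) j'' = N j'' + if j'' = j then 1 else 0 := by
    intro j''
    rcases eq_or_ne j'' j with rfl | h1
    · rw [if_pos rfl, coalSize_update_self π i j'' hπij, hsz j'', if_neg hjc]
    · rw [if_neg h1]
      rcases eq_or_ne j'' c with rfl | h2
      · have h3 := coalSize_update_src π i j hπij
        rw [hic] at h3
        rw [hsz j'', if_pos rfl] at h3
        omega
      · rw [coalSize_update_neq π i j j'' (fun h => h2 (h.symm.trans hic)) (Ne.symm h1),
          hsz j'', if_neg h2]
  refine ⟨j, insert i L, ⟨hsz', ?_, ?_⟩, ?_⟩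
  · intro i' j'
    rcases eq_or_ne i' i with rfl | hi'
    · rw [Function.update_self]
      exact htrans i' (hSPAO i' j (N j) (N j + 1) (by omega)) (hSS1 j')
    · rw [Function.update_of_ne hi']
      exact hstr i' j'
  · intro i' hi' j'
    rcases eq_or_ne i' i with rfl | hne
    · rw [Function.update_self]
      exact hSS1 j'
    · rw [Function.update_of_ne hne]
      exact hss1 i' ((Finset.mem_insert.mp hi').resolve_left hne) j'
  · rw [Finset.card_insert_of_notMem hiL]

private lemma greedy_exists {A τ : Type*} [Fintype A] [DecidableEq A] [Fintype τ]
    [DecidableEq τ] [Nonempty τ]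
    (R : Option A → τ × ℕ → τ × ℕ → Prop)
    (htotal : ∀ i x y, R i x y ∨ R i y x) (htrans : ∀ i, Transitive (R i))
    (π : Option A → τ) (h : ¬ NashStable R π) : ∃ π', GreedyStep R π π' := by
  unfold NashStable at h
  push_neg at h
  obtain ⟨i, j0, hj0⟩ := h
  obtain ⟨j, hbest⟩ := exists_best (htotal i) (htrans i)
    (fun j => ((j, joinSize π i j) : τ × ℕ))
  refine ⟨Function.update π i j, i, j, ⟨?_, ?_⟩, hbest, rfl⟩
  · exact htrans i (hbest j0) ((htotal i _ _).resolve_left hj0)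
  · intro hc
    exact hj0 (htrans i hc (hbest j0))

/-- A Nash stable partition `π0` is established on agent set `A`; a new agent
(the `none` element of `Option A`) with SPAO preferences joins, choosing its most preferred
task-coalition pair `jstar`.  The enlarged instance is still SPAO, admits a Nash stable
partition, and greedy unilateral deviations starting from the resulting partition re-converge
to a Nash stable partition within at most `|A| + 1` iterations. -/
theorem new_agent_reconvergence
    {A τ : Type*} [Fintype A] [DecidableEq A] [Fintype τ] [DecidableEq τ]
    (R : Option A → τ × ℕ → τ × ℕ → Prop)
    (htotal : ∀ i x y, R i x y ∨ R i y x)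
    (htrans : ∀ i, Transitive (R i))
    (hSPAO : ∀ (i : Option A) (t : τ) (p1 p2 : ℕ), p1 < p2 → R i (t, p1) (t, p2))
    (π0 : A → τ)
    (hNash0 : ∀ (i : A) (j : τ),
      R (some i) (π0 i, coalSize π0 (π0 i)) (j, joinSize π0 i j))
    (jstar : τ)
    (hbest : ∀ j : τ, R none (jstar, coalSize π0 jstar + 1) (j, coalSize π0 j + 1)) :
    (∀ (i : Option A) (t : τ) (p1 p2 : ℕ), p1 < p2 → R i (t, p1) (t, p2)) ∧
    (∃ π : Option A → τ, NashStable R π) ∧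
    (∀ seq : ℕ → Option A → τ,
      seq 0 = (fun x => Option.elim x jstar π0) →
      (∀ k, (¬ NashStable R (seq k) → GreedyStep R (seq k) (seq (k + 1))) ∧
            (NashStable R (seq k) → seq (k + 1) = seq k)) →
      NashStable R (seq (Fintype.card A + 1))) := by
  have hopt : ∀ (π : Option A → τ) (j : τ),
      coalSize π j = (if π none = j then 1 else 0) + coalSize (fun a => π (some a)) j := by
    intro π j
    rw [coalSize, coalSize, Finset.card_filter, Finset.card_filter, Fintype.sum_option]
  have hInit : InvC R (fun j => coalSize π0 j) jstar (fun x => Option.elim x jstar π0) {none} := by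
    refine ⟨?_, ?_, ?_⟩
    · intro j
      rw [hopt]
      simp only [Option.elim]
      have he : coalSize (fun a => π0 a) j = coalSize π0 j := rfl
      rw [he]
      by_cases h : j = jstar
      · subst h; simp only [if_pos rfl]; omega
      · rw [if_neg h]
        simp only [Ne.symm h, if_false, ↓reduceIte]
        omega
    · rintro (_ | a) j
      · show R none (jstar, coalSize π0 jstar) (j, coalSize π0 j + 1)
        exact htrans none (hSPAO none jstar _ _ (by omega)) (hbest j)
      · by_cases h : π0 a = j
        · show R (some a) (π0 a, coalSize π0 (π0 a)) (j, coalSize π0 j + 1)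
          rw [← h]
          exact hSPAO _ _ _ _ (by omega)
        · have h2 := hNash0 a j
          unfold joinSize at h2
          rw [if_neg h] at h2
          exact h2
    · intro i hi j
      simp only [Finset.mem_singleton] at hi
      subst hi
      exact hbest j
  have third : ∀ seq : ℕ → Option A → τ,
      seq 0 = (fun x => Option.elim x jstar π0) →
      (∀ k, (¬ NashStable R (seq k) → GreedyStep R (seq k) (seq (k + 1))) ∧
            (NashStable R (seq k) → seq (k + 1) = seq k)) →
      NashStable R (seq (Fintype.card A + 1)) := by
    intro seq h0 hstep
    have persist : ∀ m k, m ≤ k → NashStable R (seq m) → NashStable R (seq k) := by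
      intro m k hmk hm
      induction k, hmk using Nat.le_induction with
      | base => exact hm
      | succ k _ ih => rw [(hstep k).2 ih]; exact ih
    have key : ∀ k, (∃ m ≤ k, NashStable R (seq m)) ∨
        ∃ c L, InvC R (fun j => coalSize π0 j) c (seq k) L ∧ k + 1 ≤ L.card := by
      intro k
      induction k with
      | zero => exact Or.inr ⟨jstar, {none}, by rw [h0]; exact hInit, by simp⟩
      | succ k ih =>
        rcases ih with ⟨m, hm, hst⟩ | ⟨c, L, hInv, hcard⟩
        · exact Or.inl ⟨m, hm.trans (Nat.le_succ k), hst⟩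
        · by_cases hst : NashStable R (seq k)
          · exact Or.inl ⟨k, Nat.le_succ k, hst⟩
          · obtain ⟨c', L', hInv', hL'⟩ :=
              inv_step htotal htrans hSPAO hInv ((hstep k).1 hst)
            exact Or.inr ⟨c', L', hInv', by omega⟩
    rcases key (Fintype.card A + 1) with ⟨m, hm, hst⟩ | ⟨c, L, _, hcard⟩
    · exact persist m _ hm hst
    · exfalso
      have hcu := Finset.card_le_univ L
      rw [Fintype.card_option] at hcu
      omega
  have hne : Nonempty τ := ⟨jstar⟩
  have hex : ∀ p : Option A → τ,
      ∃ p', (¬ NashStable R p → GreedyStep R p p') ∧ (NashStable R p → p' = p) := by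
    intro p
    by_cases h : NashStable R p
    · exact ⟨p, fun hn => absurd h hn, fun _ => rfl⟩
    · obtain ⟨p', hp'⟩ := greedy_exists R htotal htrans p h
      exact ⟨p', fun _ => hp', fun hs => absurd hs h⟩
  refine ⟨hSPAO, ?_, third⟩
  let F : ℕ → Option A → τ := fun k =>
    Nat.rec (motive := fun _ => Option A → τ) (fun x => Option.elim x jstar π0)
      (fun _ p => Classical.choose (hex p)) k
  refine ⟨F (Fintype.card A + 1), third F rfl ?_⟩
  intro k
  exact Classical.choose_spec (hex (F k))
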